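/- The Legendre transform S(τ,ξ) = min_x (τ ln χ_{ω_1}(e^x) − ⟨x, ξ⟩) for the vector representation of sl_{n+1} equals the entropy expression S(τ,σ) = τ ln τ − ∑_{i=1}^{n+1} σ_i ln σ_i, where σ_i = τ/(n+1) − ξ_{i-1} + ξ_i (with ξ_0 = ξ_{n+1} = 0). -/

import Mathlib

open Finset

private lemma split9 (n : ℕ) (hn : 1 ≤ n) (F : ℕ → ℝ) :
    ∑ i ∈ Icc 1 (n+1), F i = F 1 + (∑ i ∈ Icc 2 n, F i) + F (n+1) := by
  rw [Finset.sum_Icc_succ_top (by omega) F,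
    show Icc 1 n = insert 1 (Icc 2 n) by ext i; simp [Finset.mem_Icc]; omega,
    Finset.sum_insert (by simp)]

private lemma tele9 (σ X : ℕ → ℝ) (hX0 : X 0 = 0) (m : ℕ) :
    ∑ i ∈ Icc 1 (m+1), σ i * (X i - X (i-1)) =
      ∑ a ∈ Icc 1 m, X a * (σ a - σ (a+1)) + σ (m+1) * X (m+1) := by
  induction m with
  | zero => simp [hX0]
  | succ m ih =>
      rw [Finset.sum_Icc_succ_top (by omega), ih,
        show ∑ a ∈ Icc 1 (m+1), X a * (σ a - σ (a+1)) =
          ∑ a ∈ Icc 1 m, X a * (σ a - σ (a+1)) + X (m+1) * (σ (m+1) - σ (m+2)) from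
          Finset.sum_Icc_succ_top (by omega) _]
      simp only [Nat.add_sub_cancel]
      ring

private lemma teleξ (ξ : ℕ → ℝ) (m : ℕ) :
    ∑ i ∈ Icc 1 m, (ξ i - ξ (i-1)) = ξ m - ξ 0 := by
  induction m with
  | zero => simp
  | succ m ih => rw [Finset.sum_Icc_succ_top (by omega), ih]; simp

private lemma gibbs9 (s : Finset ℕ) (σ y : ℕ → ℝ) (τ : ℝ) (hτ : 0 < τ)
    (hσ : ∀ i ∈ s, 0 < σ i) (hsum : ∑ i ∈ s, σ i = τ) :
    τ * Real.log τ - ∑ i ∈ s, σ i * Real.log (σ i) ≤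
      τ * Real.log (∑ i ∈ s, Real.exp (y i)) - ∑ i ∈ s, σ i * y i := by
  have hne : s.Nonempty := by
    rcases s.eq_empty_or_nonempty with rfl | h
    · simp at hsum; exact absurd hsum.symm (ne_of_gt hτ)
    · exact h
  set S := ∑ i ∈ s, Real.exp (y i) with hSdef
  have hS : 0 < S := Finset.sum_pos (fun i _ => Real.exp_pos _) hne
  have key : ∀ i ∈ s, σ i * (Real.log τ + y i - Real.log (σ i) - Real.log S) ≤
      τ * Real.exp (y i) / S - σ i := by
    intro i hi
    have hσi := hσ i hi
    have h1 : Real.log (τ * Real.exp (y i) / (σ i * S)) ≤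
        τ * Real.exp (y i) / (σ i * S) - 1 :=
      Real.log_le_sub_one_of_pos (by positivity)
    have h2 : Real.log (τ * Real.exp (y i) / (σ i * S)) =
        Real.log τ + y i - Real.log (σ i) - Real.log S := by
      rw [Real.log_div (by positivity) (by positivity),
        Real.log_mul (ne_of_gt hτ) (Real.exp_ne_zero _),
        Real.log_mul (ne_of_gt hσi) (ne_of_gt hS), Real.log_exp]
      ring
    rw [h2] at h1
    have h3 := mul_le_mul_of_nonneg_left h1 (le_of_lt hσi)
    have h4 : σ i * (τ * Real.exp (y i) / (σ i * S) - 1) = τ * Real.exp (y i) / S - σ i := by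
      field_simp
    linarith
  have hsumle := Finset.sum_le_sum key
  have hL : ∑ i ∈ s, σ i * (Real.log τ + y i - Real.log (σ i) - Real.log S) =
      τ * Real.log τ + (∑ i ∈ s, σ i * y i) - (∑ i ∈ s, σ i * Real.log (σ i))
        - τ * Real.log S := by
    simp only [mul_add, mul_sub]
    rw [Finset.sum_sub_distrib, Finset.sum_sub_distrib, Finset.sum_add_distrib,
      ← Finset.sum_mul, ← Finset.sum_mul, hsum]
  have hR : ∑ i ∈ s, (τ * Real.exp (y i) / S - σ i) = 0 := by
    rw [Finset.sum_sub_distrib, hsum]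
    have h5 : ∑ i ∈ s, τ * Real.exp (y i) / S = τ * S / S := by
      rw [← Finset.sum_div, ← Finset.mul_sum]
    rw [h5, mul_div_cancel_right₀ τ (ne_of_gt hS)]
    ring
  rw [hL, hR] at hsumle
  linarith



/-- The Legendre transform `S(τ,ξ) = min_x (τ ln χ_{ω_1}(e^x) − ⟨x,ξ⟩)`
for the vector representation of `sl_{n+1}` (character
`χ_{ω_1}(e^x) = e^{x_1} + ∑_{i=2}^n e^{−x_{i-1}+x_i} + e^{−x_n}` in simple-root
coordinates, pairing via the Cartan matrix `C`) equals the entropy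
`τ ln τ − ∑_{i=1}^{n+1} σ_i ln σ_i`, where `σ_i = τ/(n+1) − ξ_{i-1} + ξ_i`. -/
theorem stmt_9 (n : ℕ) (hn : 1 ≤ n) (τ : ℝ) (hτ : 0 < τ) (ξ : ℕ → ℝ)
    (hξ0 : ξ 0 = 0) (hξtop : ξ (n+1) = 0)
    (σ : ℕ → ℝ) (hσdef : ∀ i, σ i = τ / (n+1) - ξ (i-1) + ξ i)
    (hσpos : ∀ i ∈ Finset.Icc 1 (n+1), 0 < σ i)
    (C : ℕ → ℕ → ℝ)
    (hC : ∀ a b, C a b = if a = b then 2 else if a + 1 = b ∨ b + 1 = a then -1 else 0) :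
    IsLeast
      (Set.range fun x : ℕ → ℝ =>
        τ * Real.log (Real.exp (x 1)
            + (∑ i ∈ Finset.Icc 2 n, Real.exp (-x (i-1) + x i)) + Real.exp (-x n))
          - ∑ a ∈ Finset.Icc 1 n, ∑ b ∈ Finset.Icc 1 n, x a * C a b * ξ b)
      (τ * Real.log τ - ∑ i ∈ Finset.Icc 1 (n+1), σ i * Real.log (σ i)) := by
  have hn1 : ((n : ℝ) + 1) ≠ 0 := by positivity
  -- sum of σ over Icc 1 (n+1) is τ
  have hsumσ : ∑ i ∈ Icc 1 (n+1), σ i = τ := by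
    have h1 : ∀ i ∈ Icc 1 (n+1), σ i = τ / (n+1) + (ξ i - ξ (i-1)) := by
      intro i _; rw [hσdef]; ring
    rw [Finset.sum_congr rfl h1, Finset.sum_add_distrib, teleξ, hξ0, hξtop,
      Finset.sum_const, Nat.card_Icc]
    simp only [Nat.add_sub_cancel, nsmul_eq_mul, sub_zero, add_zero]
    push_cast
    field_simp
  -- inner Cartan sum
  have hCsum : ∀ a ∈ Icc 1 n, ∑ b ∈ Icc 1 n, C a b * ξ b = σ a - σ (a+1) := by
    intro a ha
    simp only [Finset.mem_Icc] at ha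
    have hterm : ∀ b ∈ Icc 1 n, C a b * ξ b =
        (if b = a then 2 * ξ b else 0) + (if b = a+1 then -ξ b else 0)
          + (if b = a-1 then -ξ b else 0) := by
      intro b hb
      simp only [Finset.mem_Icc] at hb
      rw [hC]
      split_ifs <;> first | omega | ring
    rw [Finset.sum_congr rfl hterm, Finset.sum_add_distrib, Finset.sum_add_distrib,
      Finset.sum_ite_eq', Finset.sum_ite_eq', Finset.sum_ite_eq']
    have e1 : (if a ∈ Icc 1 n then 2 * ξ a else 0) = 2 * ξ a := by
      rw [if_pos (by simp only [Finset.mem_Icc]; omega)]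
    have e2 : (if a+1 ∈ Icc 1 n then -ξ (a+1) else 0) = -ξ (a+1) := by
      split_ifs with h
      · rfl
      · simp only [Finset.mem_Icc] at h
        rw [show a + 1 = n + 1 by omega, hξtop]; ring
    have e3 : (if a-1 ∈ Icc 1 n then -ξ (a-1) else 0) = -ξ (a-1) := by
      split_ifs with h
      · rfl
      · simp only [Finset.mem_Icc] at h
        rw [show a - 1 = 0 by omega, hξ0]; ring
    rw [e1, e2, e3, hσdef a, hσdef (a+1)]
    simp only [Nat.add_sub_cancel]
    ring
  have hpair : ∀ x : ℕ → ℝ, ∑ a ∈ Icc 1 n, ∑ b ∈ Icc 1 n, x a * C a b * ξ b =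
      ∑ a ∈ Icc 1 n, x a * (σ a - σ (a+1)) := by
    intro x
    refine Finset.sum_congr rfl fun a ha => ?_
    simp only [mul_assoc]
    rw [← Finset.mul_sum, hCsum a ha]
  constructor
  · -- membership: the minimizer
    set L : ℝ := (∑ i ∈ Icc 1 (n+1), Real.log (σ i)) / (n+1) with hLdef
    refine ⟨fun a => ∑ i ∈ Icc 1 a, (Real.log (σ i) - L), ?_⟩
    set x : ℕ → ℝ := fun a => ∑ i ∈ Icc 1 a, (Real.log (σ i) - L) with hxdef
    have hx0 : x 0 = 0 := by simp [hxdef]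
    have hxfull : x (n+1) = 0 := by
      simp only [hxdef]
      rw [Finset.sum_sub_distrib, Finset.sum_const, Nat.card_Icc]
      simp only [Nat.add_sub_cancel, nsmul_eq_mul]
      rw [hLdef]
      push_cast
      field_simp
      ring
    have hstep : ∀ i, 1 ≤ i → x i = x (i-1) + (Real.log (σ i) - L) := by
      intro i hi
      simp only [hxdef]
      conv_lhs => rw [show i = (i-1)+1 by omega]
      rw [Finset.sum_Icc_succ_top (by omega), show i-1+1 = i by omega]
    have hdiff : ∀ i ∈ Icc 1 (n+1), x i - x (i-1) = Real.log (σ i) - L := by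
      intro i hi
      simp only [Finset.mem_Icc] at hi
      have := hstep i hi.1
      linarith
    have hchar : Real.exp (x 1) + (∑ i ∈ Icc 2 n, Real.exp (-x (i-1) + x i))
        + Real.exp (-x n) = τ * Real.exp (-L) := by
      have h1 : Real.exp (x 1) = Real.exp (x 1 - x 0) := by rw [hx0, sub_zero]
      have h2 : ∀ i ∈ Icc 2 n, Real.exp (-x (i-1) + x i) = Real.exp (x i - x (i-1)) := by
        intro i _; congr 1; ring
      have h3 : Real.exp (-x n) = Real.exp (x (n+1) - x n) := by
        rw [hxfull, zero_sub]
      rw [h1, Finset.sum_congr rfl h2, h3,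
        show x (n+1) - x n = x (n+1) - x ((n+1)-1) by norm_num,
        show x 1 - x 0 = x 1 - x (1-1) by norm_num,
        ← split9 n hn (fun i => Real.exp (x i - x (i-1))),
        Finset.sum_congr rfl (fun i hi => by rw [hdiff i hi]),
        Finset.sum_congr rfl (fun i hi => by
          rw [sub_eq_add_neg, Real.exp_add, Real.exp_log (hσpos i hi)]),
        ← Finset.sum_mul, hsumσ]
    have hpx : ∑ a ∈ Icc 1 n, ∑ b ∈ Icc 1 n, x a * C a b * ξ b =
        (∑ i ∈ Icc 1 (n+1), σ i * Real.log (σ i)) - τ * L := by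
      rw [hpair x]
      have ht := tele9 σ x hx0 n
      rw [hxfull, mul_zero, add_zero] at ht
      rw [← ht]
      have hc : ∑ i ∈ Icc 1 (n+1), σ i * (x i - x (i-1)) =
          ∑ i ∈ Icc 1 (n+1), σ i * (Real.log (σ i) - L) :=
        Finset.sum_congr rfl (fun i hi => by rw [hdiff i hi])
      rw [hc]
      simp only [mul_sub]
      rw [Finset.sum_sub_distrib, ← Finset.sum_mul, hsumσ]
    show τ * Real.log (Real.exp (x 1)
        + (∑ i ∈ Icc 2 n, Real.exp (-x (i-1) + x i)) + Real.exp (-x n))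
        - ∑ a ∈ Icc 1 n, ∑ b ∈ Icc 1 n, x a * C a b * ξ b
        = τ * Real.log τ - ∑ i ∈ Icc 1 (n+1), σ i * Real.log (σ i)
    rw [hchar, hpx, Real.log_mul (ne_of_gt hτ) (Real.exp_ne_zero _), Real.log_exp]
    ring
  · -- lower bound
    rintro v ⟨x, rfl⟩
    dsimp only
    set X : ℕ → ℝ := fun i => if 1 ≤ i ∧ i ≤ n then x i else 0 with hXdef
    have hX0 : X 0 = 0 := by simp [hXdef]
    have hXtop : X (n+1) = 0 := by
      simp only [hXdef]
      rw [if_neg (by omega)]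
    have hX1 : X 1 = x 1 := by
      simp only [hXdef]; rw [if_pos ⟨le_refl 1, hn⟩]
    have hXn : X n = x n := by
      simp only [hXdef]; rw [if_pos ⟨hn, le_refl n⟩]
    have hchar : Real.exp (x 1) + (∑ i ∈ Icc 2 n, Real.exp (-x (i-1) + x i))
        + Real.exp (-x n) = ∑ i ∈ Icc 1 (n+1), Real.exp (X i - X (i-1)) := by
      rw [split9 n hn (fun i => Real.exp (X i - X (i-1)))]
      have h1 : Real.exp (X 1 - X (1-1)) = Real.exp (x 1) := by
        norm_num [hX1, hX0]
      have h3 : Real.exp (X (n+1) - X (n+1-1)) = Real.exp (-x n) := by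
        rw [show n+1-1 = n by omega, hXtop, hXn, zero_sub]
      have h2 : ∀ i ∈ Icc 2 n, Real.exp (-x (i-1) + x i) = Real.exp (X i - X (i-1)) := by
        intro i hi
        simp only [Finset.mem_Icc] at hi
        have e1 : X i = x i := by
          simp only [hXdef]; rw [if_pos ⟨by omega, hi.2⟩]
        have e2 : X (i-1) = x (i-1) := by
          simp only [hXdef]; rw [if_pos ⟨by omega, by omega⟩]
        rw [e1, e2]; congr 1; ring
      rw [h1, h3, Finset.sum_congr rfl h2]
    have hpx : ∑ a ∈ Icc 1 n, ∑ b ∈ Icc 1 n, x a * C a b * ξ b =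
        ∑ i ∈ Icc 1 (n+1), σ i * (X i - X (i-1)) := by
      rw [hpair x, tele9 σ X hX0 n, hXtop, mul_zero, add_zero]
      refine Finset.sum_congr rfl fun a ha => ?_
      simp only [Finset.mem_Icc] at ha
      simp only [hXdef]
      rw [if_pos ⟨ha.1, ha.2⟩]
    rw [hchar, hpx]
    exact gibbs9 (Icc 1 (n+1)) σ (fun i => X i - X (i-1)) τ hτ hσpos hsumσ
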